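/- Let φ : ℝ → ℝⁿ be a continuously differentiable solution of the piecewise-linear ODE ẋ = A_L x + bμ for x₁ ≤ 0, ẋ = A_R x + bμ for x₁ ≥ 0, where A_L and A_R agree except possibly in their first columns. Let qᵀ = e₁ᵀ adj(A_L) and s = qᵀ b μ. If det(A_L) < 0, det(A_R) > 0, and s > 0, then d/dt (qᵀ φ(t)) ≥ s for all t, and hence ‖φ(t)‖ → ∞ as t → ±∞. -/

import Mathlib

open Matrix


lemma det_eq_of_cols (n : ℕ) (M N : Matrix (Fin (n+1)) (Fin (n+1)) ℝ)
    (h0 : ∀ k c, c ≠ 0 → M k c = N k c)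
    (j : Fin (n+1)) (hMj : M j = Pi.single (0 : Fin (n+1)) (1:ℝ))
    (hNj : N j = Pi.single (0 : Fin (n+1)) (1:ℝ)) :
    M.det = N.det := by
  rw [det_succ_column_zero, det_succ_column_zero]
  apply Finset.sum_congr rfl
  intro i _
  have hsub : M.submatrix i.succAbove Fin.succ = N.submatrix i.succAbove Fin.succ := by
    ext a bb
    exact h0 _ _ (Fin.succ_ne_zero bb)
  rw [hsub]
  by_cases hij : i = j
  · subst hij; rw [hMj, hNj]
  · have hzero : (N.submatrix i.succAbove Fin.succ).det = 0 := by
      obtain ⟨a, ha⟩ : ∃ a, i.succAbove a = j := Fin.exists_succAbove_eq (Ne.symm hij)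
      apply det_eq_zero_of_row_eq_zero a
      intro bb
      simp only [submatrix_apply, ha, hNj]
      exact Pi.single_eq_of_ne (Fin.succ_ne_zero bb) 1
    rw [hzero]; ring

lemma adj_row_eq (n : ℕ) (AL AR : Matrix (Fin (n+1)) (Fin (n+1)) ℝ)
    (hcols : ∀ j : Fin (n+1), j ≠ 0 → (fun i => AL i j) = (fun i => AR i j)) :
    adjugate AL 0 = adjugate AR 0 := by
  funext j
  rw [adjugate_apply, adjugate_apply]
  apply det_eq_of_cols
  · intro k c hc
    by_cases hk : k = j
    · subst hk; simp [updateRow_self]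
    · rw [updateRow_ne hk, updateRow_ne hk]
      exact congrFun (hcols c hc) k
  · exact updateRow_self
  · exact updateRow_self

lemma dot_adj_row_mulVec (n : ℕ) (A : Matrix (Fin (n+1)) (Fin (n+1)) ℝ)
    (x : Fin (n+1) → ℝ) :
    (adjugate A 0) ⬝ᵥ (A.mulVec x) = A.det * x 0 := by
  have h : (adjugate A).mulVec (A.mulVec x) = A.det • x := by
    rw [mulVec_mulVec, adjugate_mul, smul_mulVec, one_mulVec]
  have := congrFun h 0
  simpa [mulVec] using this



/-- For a solution `φ` of the piecewise-linear continuous ODE with both determinant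
conditions and `s = qᵀ b μ > 0`, the quantity `qᵀ φ(t)` has derivative at least `s`
at every time, and `‖φ(t)‖ → ∞` as `t → ±∞`. -/
theorem pwl_ode_monotone_diverge (n : ℕ) (AL AR : Matrix (Fin (n+1)) (Fin (n+1)) ℝ)
    (hcols : ∀ j : Fin (n+1), j ≠ 0 → (fun i => AL i j) = (fun i => AR i j))
    (b : Fin (n+1) → ℝ) (μ : ℝ)
    (F : (Fin (n+1) → ℝ) → (Fin (n+1) → ℝ))
    (hF : ∀ x, F x = if x 0 ≤ 0 then AL.mulVec x + μ • b else AR.mulVec x + μ • b)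
    (q : Fin (n+1) → ℝ) (hq : q = (adjugate AL) 0)
    (s : ℝ) (hs : s = (q ⬝ᵥ b) * μ)
    (hdetL : AL.det < 0) (hdetR : 0 < AR.det) (hspos : 0 < s)
    (φ : ℝ → (Fin (n+1) → ℝ)) (hφ : ∀ t, HasDerivAt φ (F (φ t)) t) :
    (∀ t, HasDerivAt (fun t => q ⬝ᵥ φ t) (q ⬝ᵥ F (φ t)) t ∧ s ≤ q ⬝ᵥ F (φ t)) ∧
    Filter.Tendsto (fun t => ‖φ t‖) Filter.atTop Filter.atTop ∧
    Filter.Tendsto (fun t => ‖φ t‖) Filter.atBot Filter.atTop := by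
  have hqR : q = adjugate AR 0 := hq.trans (adj_row_eq n AL AR hcols)
  have hFb : ∀ x : Fin (n+1) → ℝ, s ≤ q ⬝ᵥ F x := by
    intro x
    rw [hF]
    by_cases h0 : x 0 ≤ 0
    · rw [if_pos h0, dotProduct_add, hq, dot_adj_row_mulVec, dotProduct_smul, ← hq]
      have : 0 ≤ AL.det * x 0 := by nlinarith
      simp only [smul_eq_mul]
      nlinarith [hs]
    · rw [if_neg h0, dotProduct_add, hqR, dot_adj_row_mulVec, dotProduct_smul, ← hqR]
      push_neg at h0
      have : 0 ≤ AR.det * x 0 := le_of_lt (mul_pos hdetR h0)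
      simp only [smul_eq_mul]
      nlinarith [hs]
  have hderiv : ∀ t, HasDerivAt (fun t => q ⬝ᵥ φ t) (q ⬝ᵥ F (φ t)) t := by
    intro t
    have hpi := hasDerivAt_pi.mp (hφ t)
    have : HasDerivAt (fun t => ∑ i, q i * φ t i) (∑ i, q i * F (φ t) i) t :=
      HasDerivAt.fun_sum fun i _ => (hpi i).const_mul (q i)
    simpa [dotProduct] using this
  set g : ℝ → ℝ := fun t => q ⬝ᵥ φ t with hg
  have hmono : Monotone (fun t => g t - s * t) := by
    apply monotone_of_deriv_nonneg
    · intro t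
      exact ((hderiv t).sub ((hasDerivAt_id t).const_mul s)).differentiableAt
    · intro t
      have hd : HasDerivAt (fun t => g t - s * t) (q ⬝ᵥ F (φ t) - s * 1) t :=
        (hderiv t).sub ((hasDerivAt_id t).const_mul s)
      rw [hd.deriv]
      have := hFb (φ t)
      linarith
  -- g tends to ±∞
  have hgtop : Filter.Tendsto g Filter.atTop Filter.atTop := by
    apply Filter.tendsto_atTop_mono' Filter.atTop
      (f₁ := fun t => (g 0 - s * 0) + s * t)
    · filter_upwards [Filter.eventually_ge_atTop (0:ℝ)] with t ht
      have := hmono ht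
      simp only at this
      linarith
    · exact Filter.tendsto_atTop_add_const_left _ _
        (Filter.Tendsto.const_mul_atTop hspos Filter.tendsto_id)
  have hgbot : Filter.Tendsto g Filter.atBot Filter.atBot := by
    apply Filter.tendsto_atBot_mono' Filter.atBot
      (f₁ := fun t => (g 0 - s * 0) + s * t)
    · filter_upwards [Filter.eventually_le_atBot (0:ℝ)] with t ht
      have := hmono ht
      simp only at this
      linarith
    · exact Filter.tendsto_atBot_add_const_left _ _
        (Filter.Tendsto.const_mul_atBot hspos Filter.tendsto_id)
  -- |g| ≤ C * ‖φ‖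
  set C : ℝ := ∑ i, |q i| with hC
  have hCpos : 0 < C := by
    rcases lt_or_eq_of_le (Finset.sum_nonneg (fun i _ => abs_nonneg (q i)) : (0:ℝ) ≤ C) with h | h
    · exact h
    · exfalso
      have hq0 : ∀ i, q i = 0 := by
        intro i
        have := (Finset.sum_eq_zero_iff_of_nonneg
          (fun i _ => abs_nonneg (q i))).mp h.symm i (Finset.mem_univ i)
        exact abs_eq_zero.mp this
      have : q ⬝ᵥ b = 0 := by simp [dotProduct, hq0]
      rw [hs, this] at hspos
      simp at hspos
  have hbound : ∀ t, |g t| / C ≤ ‖φ t‖ := by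
    intro t
    rw [div_le_iff₀ hCpos]
    calc |g t| = |∑ i, q i * φ t i| := by simp [hg, dotProduct]
      _ ≤ ∑ i, |q i * φ t i| := Finset.abs_sum_le_sum_abs _ _
      _ ≤ ∑ i, |q i| * ‖φ t‖ := by
          apply Finset.sum_le_sum
          intro i _
          rw [abs_mul]
          exact mul_le_mul_of_nonneg_left (norm_le_pi_norm (φ t) i) (abs_nonneg _)
      _ = ‖φ t‖ * C := by rw [← Finset.sum_mul]; ring
  refine ⟨fun t => ⟨hderiv t, hFb (φ t)⟩, ?_, ?_⟩
  · exact Filter.tendsto_atTop_mono hbound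
      ((Filter.tendsto_abs_atTop_atTop.comp hgtop).atTop_div_const hCpos)
  · exact Filter.tendsto_atTop_mono hbound
      ((Filter.tendsto_abs_atBot_atTop.comp hgbot).atTop_div_const hCpos)
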